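/- Fix d ≥ 2. If a sequence satisfies C_0 = 1 and C_{k+1} = \sum over all d-tuples (k_1,...,k_d) of nonnegative integers with k_1+...+k_d = k of the product C_{k_1} * C_{k_2} * ... * C_{k_d}, then C_k = (1/(k(d-1)+1)) * binomial(dk, k) for all k (the Fuss–Catalan numbers). -/

import Mathlib

open Finset

/-- Raney numbers recursion: `fcA d m k` will be `m/(d*k+m) * choose (d*k+m) k`. -/
def fcA (d : ℕ) : ℕ → ℕ → ℤ
  | _, 0 => 1
  | 0, _ + 1 => 0
  | m + 1, k + 1 => fcA d m (k + 1) + fcA d (m + d) k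
termination_by m k => (k, m)

lemma fcA_zero_right (d m : ℕ) : fcA d m 0 = 1 := by
  cases m <;> rw [fcA]

lemma fcA_zero_left (d k : ℕ) : fcA d 0 (k + 1) = 0 := by
  rw [fcA]

lemma fcA_succ (d m k : ℕ) : fcA d (m + 1) (k + 1) = fcA d m (k + 1) + fcA d (m + d) k := by
  rw [fcA]

/-- Two-fold convolution identity. -/
lemma fcA_conv (d : ℕ) : ∀ k m : ℕ,
    ∑ p ∈ antidiagonal k, fcA d 1 p.1 * fcA d m p.2 = fcA d (m + 1) k := by
  intro k
  induction k using Nat.strong_induction_on with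
  | _ k ihk =>
    intro m
    induction m with
    | zero =>
      rw [Finset.sum_eq_single (k, 0)]
      · simp [fcA_zero_right]
      · rintro ⟨a, b⟩ hb hne
        rw [Finset.HasAntidiagonal.mem_antidiagonal] at hb
        have hb2 : b ≠ 0 := by rintro rfl; exact hne (by simp [← hb])
        obtain ⟨b, rfl⟩ := Nat.exists_eq_succ_of_ne_zero hb2
        rw [fcA_zero_left, mul_zero]
      · intro h
        exact absurd (Finset.HasAntidiagonal.mem_antidiagonal.mpr (by simp)) h
    | succ m ihm =>
      cases k with
      | zero => simp [fcA_zero_right]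
      | succ n =>
        rw [Finset.Nat.sum_antidiagonal_succ']
        have step : ∀ p : ℕ × ℕ,
            fcA d 1 p.1 * fcA d (m + 1) (p.2 + 1)
              = fcA d 1 p.1 * fcA d m (p.2 + 1) + fcA d 1 p.1 * fcA d (m + d) p.2 := by
          intro p; rw [fcA_succ, mul_add]
        rw [Finset.sum_congr rfl fun p _ => step p, Finset.sum_add_distrib]
        have h1 : fcA d 1 (n + 1)
              + ∑ p ∈ antidiagonal n, fcA d 1 p.1 * fcA d m (p.2 + 1)
            = fcA d (m + 1) (n + 1) := by
          rw [← ihm, Finset.Nat.sum_antidiagonal_succ', fcA_zero_right, mul_one]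
        have h2 : ∑ p ∈ antidiagonal n, fcA d 1 p.1 * fcA d (m + d) p.2
            = fcA d (m + d + 1) n := ihk n (Nat.lt_succ_self n) (m + d)
        have h3 : fcA d (m + 1 + 1) (n + 1)
            = fcA d (m + 1) (n + 1) + fcA d (m + 1 + d) n := fcA_succ d (m + 1) n
        have h4 : fcA d (m + 1 + d) n = fcA d (m + d + 1) n := by ring_nf
        dsimp only
        rw [fcA_zero_right, mul_one]
        linarith [h1, h2, h3, h4]

/-- Splitting of a sum over `antidiagonalTuple (m+1) k`. -/
lemma sum_antidiagonalTuple_succ {M : Type*} [AddCommMonoid M] (m k : ℕ)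
    (f : (Fin (m + 1) → ℕ) → M) :
    ∑ v ∈ Finset.Nat.antidiagonalTuple (m + 1) k, f v
      = ∑ p ∈ antidiagonal k, ∑ w ∈ Finset.Nat.antidiagonalTuple m p.2, f (Fin.cons p.1 w) := by
  rw [← Finset.sum_sigma ((antidiagonal k))
    (fun p => Finset.Nat.antidiagonalTuple m p.2) (fun x => f (Fin.cons x.1.1 x.2))]
  refine Finset.sum_nbij'
    (fun v : Fin (m + 1) → ℕ =>
      (⟨(v 0, ∑ i : Fin m, v i.succ), Fin.tail v⟩ : (_ : ℕ × ℕ) × (Fin m → ℕ)))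
    (fun x : (_ : ℕ × ℕ) × (Fin m → ℕ) => Fin.cons x.1.1 x.2) ?_ ?_ ?_ ?_ ?_
  · intro v hv
    rw [Finset.Nat.mem_antidiagonalTuple] at hv
    rw [Finset.mem_sigma, Finset.HasAntidiagonal.mem_antidiagonal]
    refine ⟨?_, Finset.Nat.mem_antidiagonalTuple.mpr rfl⟩
    rw [← hv, Fin.sum_univ_succ]
  · rintro ⟨⟨a, b⟩, w⟩ hx
    rw [Finset.mem_sigma] at hx
    obtain ⟨h1, h2⟩ := hx
    rw [Finset.HasAntidiagonal.mem_antidiagonal] at h1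
    rw [Finset.Nat.mem_antidiagonalTuple] at h2
    rw [Finset.Nat.mem_antidiagonalTuple, Fin.sum_cons, h2, h1]
  · intro v _
    exact Fin.cons_self_tail v
  · rintro ⟨⟨a, b⟩, w⟩ hx
    rw [Finset.mem_sigma] at hx
    obtain ⟨h1, h2⟩ := hx
    rw [Finset.Nat.mem_antidiagonalTuple] at h2
    simp only [Fin.cons_zero, Fin.tail_cons]
    congr 1
    simp [h2]
  · intro v _
    dsimp only
    rw [Fin.cons_self_tail]

/-- `d`-fold convolution identity. -/
lemma fcA_tuple (d : ℕ) : ∀ m k : ℕ,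
    ∑ v ∈ Finset.Nat.antidiagonalTuple m k, ∏ i, fcA d 1 (v i) = fcA d m k := by
  intro m
  induction m with
  | zero =>
    intro k
    cases k with
    | zero => simp [Finset.Nat.antidiagonalTuple_zero_zero, fcA_zero_right]
    | succ n => simp [Finset.Nat.antidiagonalTuple_zero_succ, fcA_zero_left]
  | succ m ihm =>
    intro k
    rw [sum_antidiagonalTuple_succ, ← fcA_conv d k m]
    refine Finset.sum_congr rfl fun p _ => ?_
    rw [← ihm p.2, Finset.mul_sum]
    refine Finset.sum_congr rfl fun w _ => ?_
    rw [Fin.prod_univ_succ]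
    simp only [Fin.cons_zero, Fin.cons_succ]

/-- Closed form for the Raney numbers. -/
lemma fcA_closed (d : ℕ) (hd : 2 ≤ d) : ∀ k m : ℕ,
    fcA d (m + 1) (k + 1)
      = ((d * (k + 1) + m).choose (k + 1) : ℤ)
        - ((d : ℤ) - 1) * ((d * (k + 1) + m).choose k) := by
  obtain ⟨e, rfl⟩ : ∃ e, d = e + 2 := ⟨d - 2, by omega⟩
  intro k
  induction k using Nat.strong_induction_on with
  | _ k ihk =>
    have hvan : ∀ j : ℕ, (((e + 2) * (j + 1) - 1).choose (j + 1) : ℤ)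
        = (((e : ℤ) + 2) - 1) * (((e + 2) * (j + 1) - 1).choose j) := by
      intro j
      have h := Nat.choose_succ_right_eq ((e + 2) * (j + 1) - 1) j
      have hsub : (e + 2) * (j + 1) - 1 - j = (e + 1) * (j + 1) := by
        rw [Nat.sub_sub]
        apply Nat.sub_eq_of_eq_add
        ring
      rw [hsub] at h
      have h' := congrArg (fun x : ℕ => (x : ℤ)) h
      push_cast at h'
      have h'' : (((e + 2) * (j + 1) - 1).choose (j + 1) : ℤ) * ((j : ℤ) + 1)
          = ((((e : ℤ) + 2) - 1) * (((e + 2) * (j + 1) - 1).choose j)) * ((j : ℤ) + 1) := by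
        linear_combination h'
      exact mul_right_cancel₀ (by positivity) h''
    intro m
    induction m with
    | zero =>
      have h1 : fcA (e + 2) 1 (k + 1) = fcA (e + 2) (e + 2) k := by
        rw [show (1 : ℕ) = 0 + 1 from rfl, fcA_succ, fcA_zero_left, zero_add, zero_add]
      rw [h1]
      cases k with
      | zero =>
        rw [fcA_zero_right]
        simp only [Nat.zero_add, Nat.mul_one, Nat.add_zero, Nat.choose_one_right,
          Nat.choose_zero_right]
        push_cast
        ring
      | succ n =>
        have h2 : fcA (e + 2) (e + 2) (n + 1) = fcA (e + 2) (e + 1 + 1) (n + 1) := rfl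
        rw [h2, ihk n (Nat.lt_succ_self n) (e + 1)]
        have hN : (e + 2) * (n + 1) + (e + 1) = (e + 2) * (n + 1 + 1) - 1 := by
          apply Nat.eq_sub_of_add_eq
          ring
        have hN2 : (e + 2) * (n + 1 + 1) + 0 = ((e + 2) * (n + 1 + 1) - 1) + 1 := by
          rw [Nat.sub_add_cancel (by positivity : 0 < (e + 2) * (n + 1 + 1)), Nat.add_zero]
        rw [hN, hN2, Nat.choose_succ_succ ((e + 2) * (n + 1 + 1) - 1) (n + 1),
          Nat.choose_succ_succ ((e + 2) * (n + 1 + 1) - 1) n]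
        have hv := hvan (n + 1)
        push_cast
        push_cast at hv
        linarith [hv]
    | succ m ihm =>
      rw [fcA_succ, ihm]
      cases k with
      | zero =>
        rw [fcA_zero_right]
        simp only [Nat.zero_add, Nat.mul_one, Nat.choose_one_right, Nat.choose_zero_right]
        push_cast
        ring
      | succ n =>
        have h2 : fcA (e + 2) (m + 1 + (e + 2)) (n + 1)
            = fcA (e + 2) (m + (e + 2) + 1) (n + 1) := by
          rw [show m + 1 + (e + 2) = m + (e + 2) + 1 from by omega]
        rw [h2, ihk n (Nat.lt_succ_self n) (m + (e + 2))]
        have hN : (e + 2) * (n + 1) + (m + (e + 2)) = (e + 2) * (n + 1 + 1) + m := by ring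
        rw [hN]
        have hN2 : (e + 2) * (n + 1 + 1) + (m + 1) = ((e + 2) * (n + 1 + 1) + m) + 1 := by ring
        rw [hN2, Nat.choose_succ_succ ((e + 2) * (n + 1 + 1) + m) (n + 1),
          Nat.choose_succ_succ ((e + 2) * (n + 1 + 1) + m) n]
        push_cast
        ring

/-- The binomial coefficient identity. -/
lemma fcA_choose (d : ℕ) (hd : 2 ≤ d) (k : ℕ) :
    ((d * k).choose k : ℤ) = ((k * (d - 1) + 1 : ℕ) : ℤ) * fcA d 1 k := by
  cases k with
  | zero => simp [fcA_zero_right]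
  | succ n =>
    obtain ⟨e, rfl⟩ : ∃ e, d = e + 2 := ⟨d - 2, by omega⟩
    rw [fcA_closed (e + 2) hd n 0]
    have h := Nat.choose_succ_right_eq ((e + 2) * (n + 1)) n
    have hsub : (e + 2) * (n + 1) - n = (n + 1) * (e + 1) + 1 := by
      apply Nat.sub_eq_of_eq_add
      ring
    rw [hsub] at h
    have h' := congrArg (fun x : ℕ => (x : ℤ)) h
    push_cast at h'
    have hd1 : (e + 2) - 1 = e + 1 := by omega
    rw [hd1]
    simp only [Nat.add_zero]
    push_cast
    linear_combination (-((e : ℤ) + 1)) * h'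

/-- Fuss–Catalan recursion: fix `d ≥ 2`. If `C 0 = 1` and
`C (k+1) = ∑_{k₁+⋯+k_d = k} C k₁ * ⋯ * C k_d`, then
`C k = (1/(k(d-1)+1)) * binomial (d*k) k`. -/
theorem fussCatalan_recursion (d : ℕ) (hd : 2 ≤ d) (C : ℕ → ℕ) (h0 : C 0 = 1)
    (hrec : ∀ k : ℕ, C (k + 1) =
      ∑ v ∈ Finset.Nat.antidiagonalTuple d k, ∏ i : Fin d, C (v i)) :
    ∀ k : ℕ, C k = (d * k).choose k / (k * (d - 1) + 1) := by
  have hC : ∀ k : ℕ, (C k : ℤ) = fcA d 1 k := by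
    intro k
    induction k using Nat.strong_induction_on with
    | _ k ih =>
      match k with
      | 0 => rw [h0, fcA_zero_right]; norm_num
      | k + 1 =>
        have h1 : fcA d 1 (k + 1) = fcA d d k := by
          rw [show (1 : ℕ) = 0 + 1 from rfl, fcA_succ, fcA_zero_left, zero_add, zero_add]
        rw [hrec k, h1, ← fcA_tuple d d k]
        push_cast
        refine Finset.sum_congr rfl fun v hv => ?_
        refine Finset.prod_congr rfl fun i _ => ?_
        refine ih (v i) ?_
        rw [Finset.Nat.mem_antidiagonalTuple] at hv
        have : v i ≤ k := hv ▸ Finset.single_le_sum (fun j _ => Nat.zero_le (v j))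
          (Finset.mem_univ i)
        omega
  intro k
  have key : (d * k).choose k = (k * (d - 1) + 1) * C k := by
    have := fcA_choose d hd k
    rw [← hC k] at this
    exact_mod_cast this
  rw [key, Nat.mul_div_cancel_left _ (Nat.succ_pos _)]
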